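/- Let p ∈ ℤ³ be nonzero and Γ ∈ ℝ³ nonzero with Γ·p = 0, and let n = Γ × p. The set L = { a ∈ ℤ³ : n·a = 0 } is a subgroup of ℤ³ of rank at least 1 (it contains p), and its rank equals 2 if and only if Γ is a real scalar multiple of an integer vector. -/

import Mathlib

open Matrix

/-- The ℤ-linear functional `a ↦ n · a` (with `a ∈ ℤ³` cast to `ℝ³`). -/
noncomputable def dotWith (n : Fin 3 → ℝ) : (Fin 3 → ℤ) →ₗ[ℤ] ℝ where
  toFun a := n ⬝ᵥ (fun i => (a i : ℝ))
  map_add' a b := by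
    simp [dotProduct, mul_add, Finset.sum_add_distrib]
  map_smul' c a := by
    simp [dotProduct, Finset.mul_sum, mul_left_comm]

lemma dotWith_apply (n : Fin 3 → ℝ) (a : Fin 3 → ℤ) :
    dotWith n a = n ⬝ᵥ (fun i => (a i : ℝ)) := rfl

lemma castv_cross (u v : Fin 3 → ℤ) :
    (fun i => ((crossProduct u v) i : ℝ)) =
      crossProduct (fun i => (u i : ℝ)) (fun i => (v i : ℝ)) := by
  funext i; fin_cases i <;> simp [cross_apply]

theorem lattice_rank_two_iff (p : Fin 3 → ℤ) (hp : p ≠ 0) (Γ : Fin 3 → ℝ) (hΓ : Γ ≠ 0)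
    (hperp : Γ ⬝ᵥ (fun i => (p i : ℝ)) = 0) :
    p ∈ LinearMap.ker (dotWith (crossProduct Γ (fun i => (p i : ℝ)))) ∧
    1 ≤ Module.finrank ℤ
        (LinearMap.ker (dotWith (crossProduct Γ (fun i => (p i : ℝ))))) ∧
    (Module.finrank ℤ
        (LinearMap.ker (dotWith (crossProduct Γ (fun i => (p i : ℝ))))) = 2 ↔
      ∃ c : ℝ, c ≠ 0 ∧ ∃ m : Fin 3 → ℤ, Γ = c • fun i => (m i : ℝ)) := by
  set P : Fin 3 → ℝ := fun i => (p i : ℝ) with hPdef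
  set n : Fin 3 → ℝ := crossProduct Γ P with hndef
  set φ := dotWith n with hφdef
  -- p is in the kernel
  have hmem : p ∈ LinearMap.ker φ := by
    rw [LinearMap.mem_ker, hφdef, dotWith_apply, hndef, dotProduct_comm]
    exact dot_cross_self Γ P
  -- P ≠ 0 and P·P ≠ 0
  have hP0 : P ≠ 0 := by
    intro h; apply hp; funext i
    have := congrFun h i
    simp only [Pi.zero_apply] at this ⊢; simp only [hPdef] at this; exact_mod_cast this
  have hPP : P ⬝ᵥ P ≠ 0 := fun h => hP0 (dotProduct_self_eq_zero.mp h)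
  have hp' : Γ 0 * P 0 + Γ 1 * P 1 + Γ 2 * P 2 = 0 := by
    simpa [dotProduct, Fin.sum_univ_three] using hperp
  have hS : P ⬝ᵥ P = P 0 * P 0 + P 1 * P 1 + P 2 * P 2 := by
    simp [dotProduct, Fin.sum_univ_three]
  -- n ≠ 0
  have hn : n ≠ 0 := by
    intro h
    apply hΓ
    have h0 := congrFun h 0
    have h1 := congrFun h 1
    have h2 := congrFun h 2
    simp only [hndef, cross_apply, Pi.zero_apply, Matrix.cons_val_zero, Matrix.cons_val_one,
      Matrix.head_cons, Matrix.cons_val_two, Matrix.tail_cons] at h0 h1 h2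
    have key : ∀ i, Γ i * (P ⬝ᵥ P) = 0 → Γ i = 0 := by
      intro i hi
      rcases mul_eq_zero.mp hi with h | h
      · exact h
      · exact absurd h hPP
    have g0 : Γ 0 = 0 := key 0 (by rw [hS]; linear_combination P 0 * hp' + P 1 * h2 - P 2 * h1)
    have g1 : Γ 1 = 0 := key 1 (by rw [hS]; linear_combination P 1 * hp' + P 2 * h0 - P 0 * h2)
    have g2 : Γ 2 = 0 := key 2 (by rw [hS]; linear_combination P 2 * hp' + P 0 * h1 - P 1 * h0)
    funext i
    fin_cases i <;> assumption
  -- rank-nullity over ℤ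
  have hrn := LinearMap.rank_range_add_rank_ker φ
  have h3 : Module.rank ℤ (Fin 3 → ℤ) = 3 := by simp
  rw [h3] at hrn
  have hk := Module.finrank_eq_rank ℤ (LinearMap.ker φ)
  have hr := Module.finrank_eq_rank ℤ (LinearMap.range φ)
  have hsum : Module.finrank ℤ (LinearMap.range φ) + Module.finrank ℤ (LinearMap.ker φ) = 3 := by
    rw [← hk, ← hr] at hrn
    exact_mod_cast hrn
  -- kernel has rank at least 1
  have hker1 : 1 ≤ Module.finrank ℤ (LinearMap.ker φ) := by
    have : Nontrivial (LinearMap.ker φ) := by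
      refine ⟨⟨p, hmem⟩, 0, fun h => hp ?_⟩
      simpa using congrArg Subtype.val h
    exact Module.finrank_pos
  -- every n i is in the range
  have hmemn : ∀ i, n i ∈ LinearMap.range φ := by
    intro i
    refine ⟨Pi.single i 1, ?_⟩
    have : (fun k => (((Pi.single i 1 : Fin 3 → ℤ) k : ℝ))) = Pi.single i (1:ℝ) := by
      funext k; simp [Pi.single_apply]
    rw [hφdef, dotWith_apply, this, dotProduct_single, mul_one]
  -- range has rank at least 1
  obtain ⟨j, hj⟩ : ∃ j, n j ≠ 0 := Function.ne_iff.mp hn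
  have hrange1 : 1 ≤ Module.finrank ℤ (LinearMap.range φ) := by
    have : Nontrivial (LinearMap.range φ) := by
      refine ⟨⟨n j, hmemn j⟩, 0, fun h => hj ?_⟩
      simpa using congrArg Subtype.val h
    exact Module.finrank_pos
  refine ⟨hmem, hker1, ?_, ?_⟩
  · -- rank 2 → Γ proportional to integer vector
    intro h2
    have hr1 : Module.rank ℤ (LinearMap.range φ) = 1 := by
      have : Module.finrank ℤ (LinearMap.range φ) = 1 := by omega
      rw [← hr, this]; norm_num
    -- each n i is a rational multiple of n j
    have hqi : ∀ i, ∃ q : ℚ, n i = (q : ℝ) * n j := by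
      intro i
      by_contra hcon
      push_neg at hcon
      have hli : LinearIndependent ℤ ![n i, n j] := by
        rw [LinearIndependent.pair_iff]
        intro s t hst
        rw [zsmul_eq_mul, zsmul_eq_mul] at hst
        by_cases hs : s = 0
        · subst hs
          simp only [Int.cast_zero, zero_mul, zero_add] at hst
          rcases mul_eq_zero.mp hst with h | h
          · exact ⟨rfl, by exact_mod_cast h⟩
          · exact absurd h hj
        · exfalso
          apply hcon ((-t : ℚ) / (s : ℚ))
          have hs' : (s : ℝ) ≠ 0 := Int.cast_ne_zero.mpr hs
          push_cast
          rw [div_mul_eq_mul_div, eq_div_iff hs']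
          linear_combination hst
      set w : Fin 2 → LinearMap.range φ := ![⟨n i, hmemn i⟩, ⟨n j, hmemn j⟩] with hw
      have hcomp : (LinearMap.range φ).subtype ∘ w = ![n i, n j] := by
        funext k; fin_cases k <;> rfl
      have hliw : LinearIndependent ℤ w :=
        LinearIndependent.of_comp (LinearMap.range φ).subtype (by rw [hcomp]; exact hli)
      have hcard := hliw.cardinal_le_rank
      rw [hr1] at hcard
      simp [Cardinal.mk_fintype] at hcard
    choose q hq using hqi
    set D : ℤ := ∏ i : Fin 3, ((q i).den : ℤ) with hD
    have hden0 : ∀ i, ((q i).den : ℤ) ≠ 0 := fun i => by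
      exact_mod_cast (q i).den_nz
    have hDne : D ≠ 0 := Finset.prod_ne_zero_iff.mpr (fun i _ => hden0 i)
    have hden : ∀ i, ((q i).den : ℤ) ∣ D := fun i =>
      Finset.dvd_prod_of_mem _ (Finset.mem_univ i)
    set m : Fin 3 → ℤ := fun i => (q i).num * (D / ((q i).den : ℤ)) with hm
    set c : ℝ := n j / (D : ℝ) with hcdef
    have hDR : (D : ℝ) ≠ 0 := Int.cast_ne_zero.mpr hDne
    have hc : c ≠ 0 := div_ne_zero hj hDR
    have keym : ∀ i, ((m i : ℝ)) = (q i : ℝ) * (D : ℝ) := by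
      intro i
      obtain ⟨k, hk⟩ := hden i
      have hdiv : D / ((q i).den : ℤ) = k := by
        rw [hk]; exact Int.mul_ediv_cancel_left _ (hden0 i)
      have hmi : m i = (q i).num * k := by rw [hm]; simp only; rw [hdiv]
      have hdR : (((q i).den : ℤ) : ℝ) ≠ 0 := Int.cast_ne_zero.mpr (hden0 i)
      rw [hmi, hk, Rat.cast_def]
      push_cast
      push_cast at hdR
      field_simp
    have hnm : ∀ i, n i = c * (m i : ℝ) := by
      intro i
      rw [hq i, keym i, hcdef]
      field_simp
    -- n = c • (cast m)
    have hnv : n = c • (fun i => (m i : ℝ)) := by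
      funext i
      rw [Pi.smul_apply, smul_eq_mul]
      exact hnm i
    -- cross identity : P ×₃ n = (P·P) • Γ
    have hid : crossProduct P n = (P ⬝ᵥ P) • Γ := by
      funext i
      fin_cases i
      · show (crossProduct P n) 0 = (P ⬝ᵥ P) • Γ 0
        simp only [hndef, cross_apply, Matrix.cons_val_zero, Matrix.cons_val_one, smul_eq_mul,
          Matrix.head_cons, Matrix.cons_val_two, Matrix.tail_cons, hS]
        linear_combination (-(P 0)) * hp'
      · show (crossProduct P n) 1 = (P ⬝ᵥ P) • Γ 1
        simp only [hndef, cross_apply, Matrix.cons_val_zero, Matrix.cons_val_one, smul_eq_mul,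
          Matrix.head_cons, Matrix.cons_val_two, Matrix.tail_cons, hS]
        linear_combination (-(P 1)) * hp'
      · show (crossProduct P n) 2 = (P ⬝ᵥ P) • Γ 2
        simp only [hndef, cross_apply, Matrix.cons_val_zero, Matrix.cons_val_one, smul_eq_mul,
          Matrix.head_cons, Matrix.cons_val_two, Matrix.tail_cons, hS]
        linear_combination (-(P 2)) * hp'
    -- assemble
    refine ⟨c / (P ⬝ᵥ P), div_ne_zero hc hPP, crossProduct p m, ?_⟩
    have hcross : crossProduct P n = c • (fun i => ((crossProduct p m) i : ℝ)) := by
      rw [hnv, LinearMap.map_smul, castv_cross, ← hPdef]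
    funext i
    have h1 := congrFun hid i
    have h2 := congrFun hcross i
    rw [Pi.smul_apply, smul_eq_mul] at h1
    rw [h1, Pi.smul_apply, smul_eq_mul] at h2
    rw [Pi.smul_apply, smul_eq_mul, div_mul_eq_mul_div, eq_div_iff hPP]
    linear_combination h2
  · -- Γ proportional to integer vector → rank 2
    rintro ⟨c, hc, m, hΓm⟩
    have hnc : n = c • (fun i => ((crossProduct m p) i : ℝ)) := by
      rw [hndef, hΓm, castv_cross]
      have : crossProduct ((c • fun i => ((m i : ℝ)))) P
          = c • crossProduct (fun i => ((m i : ℝ))) P := by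
        rw [LinearMap.map_smul]; rfl
      rw [this, hPdef]
    have hsub : LinearMap.range φ ≤ Submodule.span ℤ {c} := by
      rintro x ⟨a, rfl⟩
      rw [Submodule.mem_span_singleton]
      refine ⟨(crossProduct m p) ⬝ᵥ a, ?_⟩
      rw [hφdef, dotWith_apply, hnc]
      simp only [zsmul_eq_mul, dotProduct, Fin.sum_univ_three, Pi.smul_apply, smul_eq_mul]
      push_cast
      ring
    have hle : Module.rank ℤ (LinearMap.range φ) ≤ 1 := by
      refine le_trans (Submodule.rank_mono hsub) ?_
      have := rank_span_le (R := ℤ) ({c} : Set ℝ)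
      simpa using this
    have hfle : Module.finrank ℤ (LinearMap.range φ) ≤ 1 := by
      rw [← hr] at hle
      exact_mod_cast hle
    omega
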